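/- A Tychonoff (completely regular T1) space X is realcompact if and only if every z-ultrafilter F on X with the weak countable intersection property is fixed, where F has the weak countable intersection property if for every sequence (f_n)_{n∈ℕ} of bounded continuous real-valued functions on X such that f_n⁻¹({0}) ∈ F for every n ∈ ℕ, the intersection ⋂_{n∈ℕ} f_n⁻¹({0}) is nonempty. -/

import Mathlib

open Topology TopologicalSpace Set

universe u

/-- `X` is `E`-compact if it is homeomorphic to a closed subspace of a power `E^J`
for some nonempty index set `J`. -/
def IsECompact (E : Type*) (X : Type u)
    [TopologicalSpace E] [TopologicalSpace X] : Prop :=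
  ∃ (J : Type u) (_ : Nonempty J) (e : X → J → E),
    IsEmbedding e ∧ IsClosed (Set.range e)

/-- A zero-set of `X` is a set of the form `f ⁻¹' {0}` for a continuous
`f : X → ℝ`. -/
def IsZeroSet {X : Type u} [TopologicalSpace X] (Z : Set X) : Prop :=
  ∃ f : X → ℝ, Continuous f ∧ Z = f ⁻¹' {0}

/-- A z-filter on `X`: a nonempty family of nonempty zero-sets of `X` closed under
finite intersections and under zero-set supersets. -/
def IsZFilter {X : Type u} [TopologicalSpace X] (F : Set (Set X)) : Prop :=
  F.Nonempty ∧ (∀ A ∈ F, IsZeroSet A ∧ A.Nonempty) ∧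
    (∀ A ∈ F, ∀ B ∈ F, A ∩ B ∈ F) ∧
    (∀ A ∈ F, ∀ B : Set X, IsZeroSet B → A ⊆ B → B ∈ F)

/-- A z-ultrafilter on `X`: a z-filter not properly contained in any z-filter. -/
def IsZUltrafilter {X : Type u} [TopologicalSpace X] (F : Set (Set X)) : Prop :=
  IsZFilter F ∧ ∀ G : Set (Set X), IsZFilter G → F ⊆ G → F = G

section helpers
variable {X : Type u} [TopologicalSpace X]

lemma min_abs_one_eq_zero {a : ℝ} : min |a| 1 = 0 ↔ a = 0 := by
  rcases le_total |a| 1 with h | h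
  · rw [min_eq_left h, abs_eq_zero]
  · rw [min_eq_right h]; constructor
    · intro h0; norm_num at h0
    · intro h0; simp [h0] at h; linarith

lemma real_add_eq_zero {a b : ℝ} (ha : 0 ≤ a) (hb : 0 ≤ b) :
    a + b = 0 ↔ a = 0 ∧ b = 0 := by
  constructor
  · intro h; constructor <;> linarith
  · rintro ⟨rfl, rfl⟩; ring

lemma IsZeroSet.inter {Z1 Z2 : Set X} (h1 : IsZeroSet Z1) (h2 : IsZeroSet Z2) :
    IsZeroSet (Z1 ∩ Z2) := by
  obtain ⟨f, hf, rfl⟩ := h1; obtain ⟨g, hg, rfl⟩ := h2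
  refine ⟨fun x => |f x| + |g x|, by fun_prop, ?_⟩
  ext x
  simp only [mem_inter_iff, mem_preimage, mem_singleton_iff,
    real_add_eq_zero (abs_nonneg _) (abs_nonneg _), abs_eq_zero]

lemma isZeroSet_univ : IsZeroSet (univ : Set X) :=
  ⟨fun _ => 0, continuous_const, by ext x; simp⟩

lemma isZeroSet_preimage_Iic {g : X → ℝ} (hg : Continuous g) (t : ℝ) :
    IsZeroSet (g ⁻¹' Iic t) := by
  refine ⟨fun x => max (g x - t) 0, by fun_prop, ?_⟩
  ext x
  simp [max_eq_right_iff, sub_nonpos]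

lemma isZeroSet_preimage_Icc {g : X → ℝ} (hg : Continuous g) (a b : ℝ) :
    IsZeroSet (g ⁻¹' Icc a b) := by
  refine ⟨fun x => max (a - g x) 0 + max (g x - b) 0, by fun_prop, ?_⟩
  ext x
  simp only [mem_preimage, mem_Icc, mem_singleton_iff,
    real_add_eq_zero (le_max_right _ _) (le_max_right _ _),
    max_eq_right_iff, sub_nonpos]

lemma abs_min_abs_one_le {a : ℝ} : |min |a| 1| ≤ 1 := by
  rw [abs_of_nonneg (le_min (abs_nonneg a) zero_le_one)]
  exact min_le_right _ _

/-- A zero-set meeting every member of a z-ultrafilter belongs to it. -/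
lemma IsZUltrafilter.mem_of_meets {F : Set (Set X)} (hF : IsZUltrafilter F) {B : Set X}
    (hB : IsZeroSet B) (h : ∀ Z ∈ F, (B ∩ Z).Nonempty) : B ∈ F := by
  obtain ⟨⟨hne, hmem, hinter, hsup⟩, hmax⟩ := hF
  set G : Set (Set X) := {C | IsZeroSet C ∧ ∃ Z ∈ F, B ∩ Z ⊆ C} with hGdef
  have hFG : F ⊆ G := fun Z hZ => ⟨(hmem Z hZ).1, Z, hZ, inter_subset_right⟩
  have hGz : IsZFilter G := by
    refine ⟨hne.mono hFG, ?_, ?_, ?_⟩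
    · rintro A ⟨hAz, Z, hZ, hsub⟩
      exact ⟨hAz, (h Z hZ).mono hsub⟩
    · rintro A ⟨hAz, Z1, hZ1, h1⟩ A' ⟨hA'z, Z2, hZ2, h2⟩
      refine ⟨hAz.inter hA'z, Z1 ∩ Z2, hinter _ hZ1 _ hZ2, ?_⟩
      exact fun x hx => ⟨h1 ⟨hx.1, hx.2.1⟩, h2 ⟨hx.1, hx.2.2⟩⟩
    · rintro A ⟨hAz, Z, hZ, hsub⟩ B' hB'z hAB'
      exact ⟨hB'z, Z, hZ, hsub.trans hAB'⟩
  rw [hmax G hGz hFG]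
  obtain ⟨Z0, hZ0⟩ := hne
  exact ⟨hB, Z0, hZ0, inter_subset_left⟩

lemma IsZFilter.univ_mem {F : Set (Set X)} (hF : IsZFilter F) : (univ : Set X) ∈ F := by
  obtain ⟨Z0, hZ0⟩ := hF.1
  exact hF.2.2.2 Z0 hZ0 univ isZeroSet_univ (subset_univ _)

lemma IsZFilter.biInter_mem {F : Set (Set X)} (hF : IsZFilter F) {ι : Type*} {I : Set ι}
    (hI : I.Finite) {A : ι → Set X} (hA : ∀ i ∈ I, A i ∈ F) : ⋂ i ∈ I, A i ∈ F := by
  refine Set.Finite.induction_on (motive := fun s _ => (∀ i ∈ s, A i ∈ F) → ⋂ i ∈ s, A i ∈ F)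
    I hI (fun _ => by simpa using hF.univ_mem) ?_ hA
  intro a s _ _ ih hA'
  rw [biInter_insert]
  exact hF.2.2.1 _ (hA' a (mem_insert _ _)) _ (ih fun i hi => hA' i (mem_insert_of_mem _ hi))

end helpers

lemma forward {X : Type u} [TopologicalSpace X] (hX : IsECompact ℝ X)
    {F : Set (Set X)} (hF : IsZUltrafilter F)
    (cip : ∀ f : ℕ → X → ℝ,
      (∀ n, Continuous (f n) ∧ (∃ M : ℝ, ∀ x : X, |f n x| ≤ M) ∧ (f n) ⁻¹' {0} ∈ F) →
      (⋂ n, (f n) ⁻¹' {0}).Nonempty) :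
    (⋂₀ F).Nonempty := by
  classical
  obtain ⟨J, hJ, e, he, hcl⟩ := hX
  have hFz : IsZFilter F := hF.1
  set g : J → X → ℝ := fun j x => e x j with hg
  have hgc : ∀ j, Continuous (g j) := fun j => (continuous_apply j).comp he.continuous
  have hdisj : ∀ B : Set X, IsZeroSet B → B ∉ F → ∃ Z ∈ F, B ∩ Z = ∅ := by
    intro B hB hBF
    by_contra hc
    push_neg at hc
    exact hBF (hF.mem_of_meets hB hc)
  -- Step A : some bounded slab belongs to F
  have hA : ∀ j, ∃ N : ℕ, (g j) ⁻¹' (Icc (-(N:ℝ)) N) ∈ F := by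
    intro j
    by_contra hc
    push_neg at hc
    have hZ : ∀ N : ℕ, ∃ Z ∈ F, ((g j) ⁻¹' (Icc (-(N:ℝ)) N)) ∩ Z = ∅ :=
      fun N => hdisj _ (isZeroSet_preimage_Icc (hgc j) _ _) (hc N)
    choose Z hZF hZdisj using hZ
    have hZzs : ∀ N, ∃ h : X → ℝ, Continuous h ∧ Z N = h ⁻¹' {0} :=
      fun N => (hFz.2.1 _ (hZF N)).1
    choose h hhc hhz using hZzs
    set b : ℕ → X → ℝ := fun N x => min |h N x| 1 with hb
    have hbz : ∀ N, (b N) ⁻¹' {0} = Z N := by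
      intro N; rw [hhz N]; ext x
      simp only [hb, mem_preimage, mem_singleton_iff, min_abs_one_eq_zero]
    obtain ⟨x, hx⟩ := cip b fun N =>
      ⟨by fun_prop, ⟨1, fun x => abs_min_abs_one_le⟩, by rw [hbz]; exact hZF N⟩
    obtain ⟨N, hN⟩ := exists_nat_gt |g j x|
    have hxZ : x ∈ Z N := by rw [← hbz N]; exact mem_iInter.1 hx N
    have hxA : x ∈ (g j) ⁻¹' (Icc (-(N:ℝ)) N) := by
      rw [mem_preimage, mem_Icc, ← abs_le]
      exact hN.le
    exact Set.notMem_empty x (hZdisj N ▸ mem_inter hxA hxZ)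
  choose N hN using hA
  set S : J → Set ℝ := fun j => {t | (g j) ⁻¹' (Iic t) ∈ F} with hS
  have hSne : ∀ j, ((N j : ℝ)) ∈ S j := by
    intro j
    exact hFz.2.2.2 _ (hN j) _ (isZeroSet_preimage_Iic (hgc j) _)
      fun x hx => hx.2
  have hSbdd : ∀ j, BddBelow (S j) := by
    intro j
    refine ⟨-(N j : ℝ), fun t ht => ?_⟩
    by_contra hlt
    push_neg at hlt
    have hmem : (g j) ⁻¹' (Iic t) ∩ (g j) ⁻¹' (Icc (-(N j:ℝ)) (N j)) ∈ F :=
      hFz.2.2.1 _ ht _ (hN j)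
    obtain ⟨x, hx1, hx2⟩ := (hFz.2.1 _ hmem).2
    have h1 : g j x ≤ t := hx1
    have h2 : -(N j : ℝ) ≤ g j x := hx2.1
    linarith
  set r : J → ℝ := fun j => sInf (S j) with hr
  have core : ∀ j, ∀ ε : ℝ, 0 < ε → (g j) ⁻¹' (Icc (r j - ε) (r j + ε)) ∈ F := by
    intro j ε hε
    obtain ⟨t, htS, htlt⟩ := exists_lt_of_csInf_lt ⟨_, hSne j⟩
      (lt_add_of_pos_right (r j) hε)
    have hE : (g j) ⁻¹' (Iic (r j + ε)) ∈ F :=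
      hFz.2.2.2 _ htS _ (isZeroSet_preimage_Iic (hgc j) _)
        (preimage_mono (Iic_subset_Iic.2 htlt.le))
    have hBnF : (g j) ⁻¹' (Iic (r j - ε)) ∉ F := by
      intro hBF
      have : r j ≤ r j - ε := csInf_le (hSbdd j) hBF
      linarith
    obtain ⟨Z, hZF, hZB⟩ := hdisj _ (isZeroSet_preimage_Iic (hgc j) _) hBnF
    refine hFz.2.2.2 _ (hFz.2.2.1 _ hZF _ hE) _ (isZeroSet_preimage_Icc (hgc j) _ _) ?_
    rintro x ⟨hxZ, hxE⟩
    refine ⟨?_, hxE⟩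
    by_contra hlt
    push_neg at hlt
    exact Set.notMem_empty x (hZB ▸ mem_inter (le_of_lt hlt) hxZ)
  set p : J → ℝ := fun j => r j with hp
  have hpcl : ∀ Z ∈ F, p ∈ closure (e '' Z) := by
    intro Z hZ
    rw [mem_closure_iff_nhds]
    intro s hs
    rw [nhds_pi, Filter.mem_pi] at hs
    obtain ⟨I, hIfin, t, htm, hts⟩ := hs
    have hball : ∀ i : J, ∃ ε : ℝ, 0 < ε ∧ Icc (r i - ε) (r i + ε) ⊆ t i := by
      intro i
      obtain ⟨ε, hε, hb⟩ := Metric.mem_nhds_iff.1 (htm i)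
      refine ⟨ε/2, by linarith, fun y hy => hb ?_⟩
      rw [Metric.mem_ball, Real.dist_eq]
      have : |y - r i| ≤ ε/2 := abs_le.2 ⟨by linarith [hy.1], by linarith [hy.2]⟩
      linarith
    choose ε hε hsub using hball
    have hWF : (⋂ i ∈ I, (g i) ⁻¹' (Icc (r i - ε i) (r i + ε i))) ∩ Z ∈ F :=
      hFz.2.2.1 _ (hFz.biInter_mem hIfin fun i _ => core i (ε i) (hε i)) _ hZ
    obtain ⟨x, hxW, hxZ⟩ := (hFz.2.1 _ hWF).2
    refine ⟨e x, hts ?_, mem_image_of_mem e hxZ⟩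
    rw [Set.mem_pi]
    intro i hi
    exact hsub i (mem_iInter₂.1 hxW i hi)
  have hce : IsClosedEmbedding e := ⟨he, hcl⟩
  have himcl : ∀ Z ∈ F, p ∈ e '' Z := by
    intro Z hZ
    obtain ⟨f, hf, hfz⟩ := (hFz.2.1 Z hZ).1
    have hZc : IsClosed Z := hfz ▸ isClosed_singleton.preimage hf
    exact (hce.isClosedMap Z hZc).closure_eq ▸ hpcl Z hZ
  obtain ⟨Z0, hZ0⟩ := hFz.1
  obtain ⟨x0, hx0Z, hx0e⟩ := himcl Z0 hZ0
  refine ⟨x0, fun Z hZ => ?_⟩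
  obtain ⟨x1, hx1Z, hx1e⟩ := himcl Z hZ
  rwa [he.injective (hx1e.trans hx0e.symm)] at hx1Z

lemma backward {X : Type u} [TopologicalSpace X] [T1Space X] [CompletelyRegularSpace X]
    (H : ∀ F : Set (Set X), IsZUltrafilter F →
      (∀ f : ℕ → X → ℝ,
        (∀ n, Continuous (f n) ∧ (∃ M : ℝ, ∀ x : X, |f n x| ≤ M) ∧ (f n) ⁻¹' {0} ∈ F) →
        (⋂ n, (f n) ⁻¹' {0}).Nonempty) →
      (⋂₀ F).Nonempty) :
    IsECompact ℝ X := by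
  classical
  set C := {f : X → ℝ // Continuous f} with hC
  set e : X → C → ℝ := fun x f => f.1 x with he
  have hec : Continuous e := continuous_pi fun f => f.2
  -- real-valued separating functions from complete regularity
  have sep : ∀ (x : X) (K : Set X), IsClosed K → x ∉ K →
      ∃ gR : C, gR.1 x = 0 ∧ ∀ z ∈ K, gR.1 z = 1 := by
    intro x K hK hxK
    obtain ⟨f, hfc, hfx, hfK⟩ := CompletelyRegularSpace.completely_regular x K hK hxK
    refine ⟨⟨fun z => (f z : ℝ), continuous_subtype_val.comp hfc⟩, by simp [hfx], ?_⟩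
    intro z hz
    have : f z = 1 := hfK hz
    simp [this]
  have hinj : Function.Injective e := by
    intro x y hxy
    by_contra hne
    obtain ⟨gR, hgx, hgy⟩ := sep x {y} isClosed_singleton (by simpa)
    have := congrFun hxy gR
    simp only [he] at this
    rw [hgx, hgy y rfl] at this
    exact zero_ne_one this
  have hind : IsInducing e := by
    rw [isInducing_iff_nhds]
    intro x
    refine le_antisymm ((hec.tendsto x).le_comap) ?_
    intro U hU
    obtain ⟨V, hVU, hVo, hxV⟩ := mem_nhds_iff.1 hU
    obtain ⟨gR, hgx, hgK⟩ := sep x Vᶜ hVo.isClosed_compl (by simpa)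
    refine Filter.mem_comap.2 ⟨(fun q => q gR) ⁻¹' (Iio 1), ?_, ?_⟩
    · apply IsOpen.mem_nhds (isOpen_Iio.preimage (continuous_apply gR))
      show e x gR < 1
      simp [he, hgx]
    · intro z hz
      apply hVU
      by_contra hzV
      have h1 : gR.1 z = 1 := hgK z hzV
      have h2 : gR.1 z < 1 := hz
      rw [h1] at h2
      exact lt_irrefl _ h2
  have hclosed : IsClosed (range e) := by
    refine isClosed_of_closure_subset ?_
    intro p hp
    have key : ∀ φ ψ : (C → ℝ) → ℝ, Continuous φ → Continuous ψ →
        (∀ x, φ (e x) = ψ (e x)) → φ p = ψ p := by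
      intro φ ψ hφ hψ hagree
      have hsub : range e ⊆ {q | φ q = ψ q} := by rintro _ ⟨x, rfl⟩; exact hagree x
      exact closure_minimal hsub (isClosed_eq hφ hψ) hp
    have hnonneg : ∀ f : C, (∀ x, 0 ≤ f.1 x) → 0 ≤ p f := by
      intro f hf
      have hsub : range e ⊆ {q | 0 ≤ q f} := by rintro _ ⟨x, rfl⟩; exact hf x
      exact closure_minimal hsub (isClosed_le continuous_const (continuous_apply f)) hp
    set F : Set (Set X) := {Z | ∃ f : C, Z = f.1 ⁻¹' {0} ∧ p f = 0} with hF
    have hne : ∀ f : C, p f = 0 → (f.1 ⁻¹' {0}).Nonempty := by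
      intro f hpf
      by_contra hc
      rw [not_nonempty_iff_eq_empty, eq_empty_iff_forall_notMem] at hc
      have hc' : ∀ x, f.1 x ≠ 0 := by
        intro x hx; exact hc x (by simpa using hx)
      set ginv : C := ⟨fun x => (f.1 x)⁻¹, f.2.inv₀ hc'⟩ with hgi
      have h1 : p f * p ginv = 1 :=
        key (fun q => q f * q ginv) (fun _ => 1)
          ((continuous_apply f).mul (continuous_apply ginv)) continuous_const
          (fun x => mul_inv_cancel₀ (hc' x))
      rw [hpf, zero_mul] at h1
      exact zero_ne_one h1
    have hp0 : p (⟨fun _ => 0, continuous_const⟩ : C) = 0 :=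
      key _ (fun _ => 0) (continuous_apply _) continuous_const (fun x => rfl)
    have hFz : IsZFilter F := by
      refine ⟨⟨univ, ⟨fun _ => 0, continuous_const⟩, by ext x; simp, hp0⟩, ?_, ?_, ?_⟩
      · rintro A ⟨f, rfl, hpf⟩
        exact ⟨⟨f.1, f.2, rfl⟩, hne f hpf⟩
      · rintro A ⟨f, rfl, hpf⟩ B ⟨g2, rfl, hpg⟩
        refine ⟨⟨fun x => |f.1 x| + |g2.1 x|, f.2.abs.add g2.2.abs⟩, ?_, ?_⟩
        · ext x
          simp only [mem_inter_iff, mem_preimage, mem_singleton_iff,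
            real_add_eq_zero (abs_nonneg _) (abs_nonneg _), abs_eq_zero]
        · have h1 : p ⟨fun x => |f.1 x| + |g2.1 x|, f.2.abs.add g2.2.abs⟩ = |p f| + |p g2| :=
            key _ (fun q => |q f| + |q g2|) (continuous_apply _)
              ((continuous_apply f).abs.add (continuous_apply g2).abs)
              (fun x => rfl)
          rw [h1, hpf, hpg]; simp
      · rintro A ⟨f, rfl, hpf⟩ B ⟨g2, hg2c, rfl⟩ hsub
        refine ⟨⟨fun x => min |f.1 x| |g2 x|, f.2.abs.min hg2c.abs⟩, ?_, ?_⟩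
        · ext x
          simp only [mem_preimage, mem_singleton_iff]
          constructor
          · intro hx
            have hg0 : |g2 x| = 0 := by rw [hx, abs_zero]
            have hle : |g2 x| ≤ |f.1 x| := by rw [hg0]; exact abs_nonneg _
            rw [min_eq_right hle, hg0]
          · intro hx
            rcases le_total |f.1 x| |g2 x| with hle | hle
            · rw [min_eq_left hle, abs_eq_zero] at hx
              have hxB : x ∈ g2 ⁻¹' {0} := hsub (by simp [hx])
              simpa using hxB
            · rw [min_eq_right hle, abs_eq_zero] at hx
              exact hx
        · have h1 : p ⟨fun x => min |f.1 x| |g2 x|, f.2.abs.min hg2c.abs⟩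
              = min |p f| |p ⟨g2, hg2c⟩| :=
            key _ (fun q => min |q f| |q ⟨g2, hg2c⟩|) (continuous_apply _)
              ((continuous_apply f).abs.min (continuous_apply (⟨g2, hg2c⟩ : C)).abs)
              (fun x => rfl)
          rw [h1, hpf, abs_zero, min_eq_left (abs_nonneg _)]
    have crux : ∀ G : Set (Set X), IsZFilter G → F ⊆ G → ∀ gf : C,
        gf.1 ⁻¹' {0} ∈ G → p ⟨fun x => min |gf.1 x| 1, gf.2.abs.min continuous_const⟩ = 0 := by
      intro G hG hFG gf hBG
      set h : C := ⟨fun x => min |gf.1 x| 1, gf.2.abs.min continuous_const⟩ with hhdef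
      set c := p h with hcdef
      have hc0 : 0 ≤ c := hnonneg h fun x => le_min (abs_nonneg _) zero_le_one
      rcases eq_or_lt_of_le hc0 with heq | hlt
      · exact heq.symm
      · exfalso
        set k : C := ⟨fun x => max (c/2 - h.1 x) 0,
          (continuous_const.sub h.2).max continuous_const⟩ with hkdef
        have hpk : p k = 0 := by
          have h2 : p k = max (c/2 - p h) 0 :=
            key _ (fun q => max (c/2 - q h) 0) (continuous_apply _)
              ((continuous_const.sub (continuous_apply h)).max continuous_const)
              (fun x => rfl)
          rw [h2, ← hcdef, max_eq_right_iff]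
          linarith
        have hkF : k.1 ⁻¹' {0} ∈ F := ⟨k, rfl, hpk⟩
        have hdisj : k.1 ⁻¹' {0} ∩ gf.1 ⁻¹' {0} = ∅ := by
          rw [eq_empty_iff_forall_notMem]
          rintro x ⟨hk, hg⟩
          simp only [mem_preimage, mem_singleton_iff] at hk hg
          have hmin0 : |gf.1 x| ⊓ 1 = 0 := by
            rw [hg, abs_zero]; exact min_eq_left zero_le_one
          change max (c/2 - min |gf.1 x| 1) 0 = 0 at hk
          rw [hmin0, sub_zero] at hk
          have hmax : max (c/2) 0 = c/2 := max_eq_left (by linarith)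
          rw [hmax] at hk
          linarith
        have hmem := hG.2.2.1 _ (hFG hkF) _ hBG
        obtain ⟨x, hx⟩ := (hG.2.1 _ hmem).2
        rw [hdisj] at hx
        exact Set.notMem_empty x hx
    have hFu : IsZUltrafilter F := by
      refine ⟨hFz, fun G hG hFG => Subset.antisymm hFG ?_⟩
      intro B hBG
      obtain ⟨⟨g2, hg2c, rfl⟩, -⟩ := hG.2.1 B hBG
      refine ⟨⟨fun x => min |g2 x| 1, hg2c.abs.min continuous_const⟩, ?_,
        crux G hG hFG ⟨g2, hg2c⟩ hBG⟩
      ext x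
      simp [min_abs_one_eq_zero]
    have hcip : ∀ f : ℕ → X → ℝ,
        (∀ n, Continuous (f n) ∧ (∃ M : ℝ, ∀ x : X, |f n x| ≤ M) ∧ (f n) ⁻¹' {0} ∈ F) →
        (⋂ n, (f n) ⁻¹' {0}).Nonempty := by
      intro f hf
      set Fn : ℕ → C := fun n => ⟨f n, (hf n).1⟩ with hFndef
      set h : ℕ → C := fun n => ⟨fun x => min |f n x| 1,
        (hf n).1.abs.min continuous_const⟩ with hhdef
      have hph : ∀ n, p (h n) = 0 := fun n => crux F hFz Subset.rfl (Fn n) (hf n).2.2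
      have hsummable : Summable (fun n : ℕ => (1/2 : ℝ)^n) := summable_geometric_two
      have hterm_nonneg : ∀ n x, 0 ≤ (1/2:ℝ)^n * (h n).1 x := fun n x =>
        mul_nonneg (by positivity) (le_min (abs_nonneg _) zero_le_one)
      have hterm_le : ∀ (n : ℕ) (x : X), ‖(1/2:ℝ)^n * (h n).1 x‖ ≤ (1/2:ℝ)^n := by
        intro n x
        rw [Real.norm_eq_abs, abs_mul, abs_of_nonneg (by positivity : (0:ℝ) ≤ (1/2:ℝ)^n)]
        calc (1/2:ℝ)^n * |(h n).1 x| ≤ (1/2:ℝ)^n * 1 :=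
              mul_le_mul_of_nonneg_left abs_min_abs_one_le (by positivity)
          _ = (1/2:ℝ)^n := mul_one _
      set g : X → ℝ := fun x => ∑' n, (1/2:ℝ)^n * (h n).1 x with hgdef
      have hgc : Continuous g :=
        continuous_tsum (fun n => continuous_const.mul (h n).2) hsummable hterm_le
      have hsum : ∀ x, Summable fun n => (1/2:ℝ)^n * (h n).1 x := fun x =>
        Summable.of_norm_bounded hsummable (fun n => hterm_le n x)
      have hgz : g ⁻¹' {0} = ⋂ n, (f n) ⁻¹' {0} := by
        ext x
        simp only [mem_preimage, mem_singleton_iff, mem_iInter]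
        constructor
        · intro hx n
          have hle : (1/2:ℝ)^n * (h n).1 x ≤ 0 := by
            have hle₀ : (1/2:ℝ)^n * (h n).1 x ≤ g x :=
              Summable.le_tsum (hsum x) n (fun m _ => hterm_nonneg m x)
            rwa [hx] at hle₀
          have h0 : (1/2:ℝ)^n * (h n).1 x = 0 := le_antisymm hle (hterm_nonneg n x)
          rcases mul_eq_zero.1 h0 with hpow | hmin
          · exact absurd hpow (by positivity)
          · exact min_abs_one_eq_zero.1 hmin
        · intro hx
          have hterm0 : ∀ n, (1/2:ℝ)^n * (h n).1 x = 0 := by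
            intro n
            have : (h n).1 x = 0 := by simp [hhdef, hx n]
            rw [this, mul_zero]
          rw [hgdef]
          simp only [hterm0, tsum_zero]
      have hpg : p ⟨g, hgc⟩ = 0 := by
        have hψc : Continuous fun q : C → ℝ => ∑' n, (1/2:ℝ)^n * min |q (Fn n)| 1 :=
          continuous_tsum
            (fun n => continuous_const.mul
              (((continuous_apply (Fn n)).abs.min continuous_const))) hsummable
            (fun n q => by
              rw [Real.norm_eq_abs, abs_mul,
                abs_of_nonneg (by positivity : (0:ℝ) ≤ (1/2:ℝ)^n)]
              calc (1/2:ℝ)^n * |min |q (Fn n)| 1| ≤ (1/2:ℝ)^n * 1 :=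
                    mul_le_mul_of_nonneg_left abs_min_abs_one_le (by positivity)
                _ = (1/2:ℝ)^n := mul_one _)
        have hkey : p ⟨g, hgc⟩ = ∑' n, (1/2:ℝ)^n * min |p (Fn n)| 1 :=
          key _ _ (continuous_apply _) hψc (fun x => rfl)
        have hmin0 : ∀ n, min |p (Fn n)| 1 = 0 := by
          intro n
          have hthis : p (h n) = min |p (Fn n)| 1 :=
            key (fun q => q (h n)) (fun q => min |q (Fn n)| 1)
              (continuous_apply _)
              ((continuous_apply (Fn n)).abs.min continuous_const) (fun x => rfl)
          rw [← hthis, hph n]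
        rw [hkey]
        simp only [hmin0, mul_zero, tsum_zero]
      have hmemF : g ⁻¹' {0} ∈ F := ⟨⟨g, hgc⟩, rfl, hpg⟩
      rw [← hgz]
      exact hne _ hpg
    obtain ⟨x, hx⟩ := H F hFu hcip
    refine ⟨x, ?_⟩
    funext f
    set hf : C := ⟨fun y => min |f.1 y - p f| 1,
      ((f.2.sub continuous_const).abs).min continuous_const⟩ with hfdef
    have hphf : p hf = 0 := by
      have hthis : p hf = min |p f - p f| 1 :=
        key (fun q => q hf) (fun q => min |q f - p f| 1) (continuous_apply _)
          (((continuous_apply f).sub continuous_const).abs.min continuous_const)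
          (fun y => rfl)
      rw [hthis]
      simp
    have hxm : x ∈ hf.1 ⁻¹' {0} := hx _ ⟨hf, rfl, hphf⟩
    have h0 : min |f.1 x - p f| 1 = 0 := hxm
    have := min_abs_one_eq_zero.1 h0
    have : f.1 x = p f := by linarith [sub_eq_zero.1 this]
    exact this
  exact ⟨C, ⟨⟨fun _ => 0, continuous_const⟩⟩, e, ⟨hind, hinj⟩, hclosed⟩

/-- A Tychonoff space `X` is realcompact if and only if every z-ultrafilter `F` on
`X` with the weak countable intersection property is fixed, where `F` has the weak
countable intersection property if for every sequence `(fₙ)` of bounded continuous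
real-valued functions on `X` with `fₙ ⁻¹' {0} ∈ F` for all `n`, the intersection
`⋂ n, fₙ ⁻¹' {0}` is nonempty. -/
theorem stmt10 {X : Type u} [TopologicalSpace X] [T1Space X] [CompletelyRegularSpace X] :
    IsECompact ℝ X ↔
    ∀ F : Set (Set X), IsZUltrafilter F →
      (∀ f : ℕ → X → ℝ,
        (∀ n, Continuous (f n) ∧ (∃ M : ℝ, ∀ x : X, |f n x| ≤ M) ∧ (f n) ⁻¹' {0} ∈ F) →
        (⋂ n, (f n) ⁻¹' {0}).Nonempty) →
      (⋂₀ F).Nonempty := by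
  exact ⟨fun h F hF cip => forward h hF cip, backward⟩
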